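/- Let Y, Ŷ, Y* be d×d real matrices such that ‖Y‖₁ ≤ ‖Y*‖₁, ‖Ŷ‖₁ ≤ ‖Y*‖₁ (entrywise ℓ₁ norms), and Y* has at most s nonzero entries in each row. Then ‖Y - Ŷ‖₁ ≤ 2√(sd) · ‖Y - Ŷ‖_F + 4√(sd) · ‖Ŷ - Y*‖_F. -/

import Mathlib

open Finset

private lemma key_lemma (d s : ℕ) (X Ystar : Matrix (Fin d) (Fin d) ℝ)
    (hX : ∑ i, ∑ j, |X i j| ≤ ∑ i, ∑ j, |Ystar i j|)
    (hsparse : ∀ i, ({j | Ystar i j ≠ 0} : Finset (Fin d)).card ≤ s) :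
    ∑ i, ∑ j, |X i j - Ystar i j| ≤
      2 * Real.sqrt (s * d) * Real.sqrt (∑ i, ∑ j, (X i j - Ystar i j) ^ 2) := by
  classical
  set T : Finset (Fin d × Fin d) := univ.filter (fun p => Ystar p.1 p.2 ≠ 0) with hT
  have hcard : (T.card : ℝ) ≤ (s : ℝ) * d := by
    have : T.card ≤ s * d := by
      have h1 : T.card = ∑ i : Fin d, ({j | Ystar i j ≠ 0} : Finset (Fin d)).card := by
        simp only [hT, Finset.card_filter]
        rw [Fintype.sum_prod_type]
      rw [h1]
      calc ∑ i : Fin d, ({j | Ystar i j ≠ 0} : Finset (Fin d)).card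
          ≤ ∑ _i : Fin d, s := Finset.sum_le_sum fun i _ => hsparse i
        _ = d * s := by simp [mul_comm]
        _ = s * d := by ring
    calc (T.card : ℝ) ≤ ((s * d : ℕ) : ℝ) := by exact_mod_cast this
      _ = (s : ℝ) * d := by push_cast; ring
  -- notation: total sums over product type
  have hsum_abs : ∑ i, ∑ j, |X i j - Ystar i j|
      = ∑ p : Fin d × Fin d, |X p.1 p.2 - Ystar p.1 p.2| := by
    rw [Fintype.sum_prod_type]
  have hsum_sq : ∑ i, ∑ j, (X i j - Ystar i j) ^ 2
      = ∑ p : Fin d × Fin d, (X p.1 p.2 - Ystar p.1 p.2) ^ 2 := by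
    rw [Fintype.sum_prod_type]
  set M : Fin d × Fin d → ℝ := fun p => X p.1 p.2 - Ystar p.1 p.2 with hM
  -- off-support sum bounded by on-support sum
  have hzero : ∀ p ∈ Tᶜ, Ystar p.1 p.2 = 0 := by
    intro p hp
    simp only [hT, Finset.mem_compl, Finset.mem_filter, Finset.mem_univ, true_and,
      not_not] at hp
    exact hp
  have hXtotal : ∑ p : Fin d × Fin d, |X p.1 p.2| ≤ ∑ p : Fin d × Fin d, |Ystar p.1 p.2| := by
    rw [Fintype.sum_prod_type, Fintype.sum_prod_type]; exact hX
  have hoff : ∑ p ∈ Tᶜ, |M p| ≤ ∑ p ∈ T, |M p| := by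
    have h1 : ∑ p ∈ Tᶜ, |M p| = ∑ p ∈ Tᶜ, |X p.1 p.2| := by
      refine Finset.sum_congr rfl fun p hp => ?_
      rw [hM]; simp [hzero p hp]
    have h2 : ∑ p ∈ Tᶜ, |X p.1 p.2| =
        (∑ p : Fin d × Fin d, |X p.1 p.2|) - ∑ p ∈ T, |X p.1 p.2| := by
      rw [eq_sub_iff_add_eq, Finset.sum_compl_add_sum]
    have h3 : ∑ p : Fin d × Fin d, |Ystar p.1 p.2| = ∑ p ∈ T, |Ystar p.1 p.2| := by
      rw [← Finset.sum_compl_add_sum T (fun p => |Ystar p.1 p.2|)]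
      have : ∑ p ∈ Tᶜ, |Ystar p.1 p.2| = 0 := by
        refine Finset.sum_eq_zero fun p hp => by simp [hzero p hp]
      rw [this, zero_add]
    have h4 : ∑ p ∈ T, (|Ystar p.1 p.2| - |X p.1 p.2|) ≤ ∑ p ∈ T, |M p| := by
      refine Finset.sum_le_sum fun p _ => ?_
      rw [hM]
      calc |Ystar p.1 p.2| - |X p.1 p.2| ≤ |Ystar p.1 p.2 - X p.1 p.2| :=
            abs_sub_abs_le_abs_sub _ _
        _ = |X p.1 p.2 - Ystar p.1 p.2| := abs_sub_comm _ _
    calc ∑ p ∈ Tᶜ, |M p|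
        = (∑ p : Fin d × Fin d, |X p.1 p.2|) - ∑ p ∈ T, |X p.1 p.2| := by rw [h1, h2]
      _ ≤ (∑ p : Fin d × Fin d, |Ystar p.1 p.2|) - ∑ p ∈ T, |X p.1 p.2| := by
          linarith [hXtotal]
      _ = ∑ p ∈ T, (|Ystar p.1 p.2| - |X p.1 p.2|) := by
          rw [h3, Finset.sum_sub_distrib]
      _ ≤ ∑ p ∈ T, |M p| := h4
  -- Cauchy–Schwarz on T
  have hCS : ∑ p ∈ T, |M p| ≤ Real.sqrt ((s : ℝ) * d) * Real.sqrt (∑ p : Fin d × Fin d, M p ^ 2) := by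
    have h1 : ∑ p ∈ T, |M p| = ∑ p ∈ T, |M p| * 1 := by simp
    have h2 := Real.sum_mul_le_sqrt_mul_sqrt T (fun p => |M p|) (fun _ => 1)
    simp only [one_pow, mul_one, sq_abs] at h2
    have h3 : Real.sqrt (∑ p ∈ T, M p ^ 2) ≤ Real.sqrt (∑ p : Fin d × Fin d, M p ^ 2) := by
      apply Real.sqrt_le_sqrt
      exact Finset.sum_le_sum_of_subset_of_nonneg (Finset.subset_univ T)
        (fun p _ _ => sq_nonneg _)
    have h4 : Real.sqrt (∑ _p ∈ T, (1 : ℝ)) ≤ Real.sqrt ((s : ℝ) * d) := by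
      apply Real.sqrt_le_sqrt
      simpa using hcard
    calc ∑ p ∈ T, |M p| ≤ Real.sqrt (∑ p ∈ T, M p ^ 2) * Real.sqrt (∑ _p ∈ T, (1 : ℝ)) := h2
      _ ≤ Real.sqrt (∑ p : Fin d × Fin d, M p ^ 2) * Real.sqrt ((s : ℝ) * d) := by
          apply mul_le_mul h3 h4 (Real.sqrt_nonneg _) (Real.sqrt_nonneg _)
      _ = Real.sqrt ((s : ℝ) * d) * Real.sqrt (∑ p : Fin d × Fin d, M p ^ 2) := mul_comm _ _
  rw [hsum_abs, hsum_sq]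
  calc ∑ p : Fin d × Fin d, |M p| = ∑ p ∈ Tᶜ, |M p| + ∑ p ∈ T, |M p| :=
        (Finset.sum_compl_add_sum T _).symm
    _ ≤ 2 * ∑ p ∈ T, |M p| := by linarith [hoff]
    _ ≤ 2 * (Real.sqrt ((s : ℝ) * d) * Real.sqrt (∑ p : Fin d × Fin d, M p ^ 2)) := by
        linarith [hCS]
    _ = 2 * Real.sqrt ((s : ℝ) * d) * Real.sqrt (∑ p : Fin d × Fin d, M p ^ 2) := by ring

private lemma minkowski_aux (d : ℕ) (u v : Fin d → Fin d → ℝ) :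
    Real.sqrt (∑ i, ∑ j, (u i j + v i j) ^ 2) ≤
      Real.sqrt (∑ i, ∑ j, u i j ^ 2) + Real.sqrt (∑ i, ∑ j, v i j ^ 2) := by
  classical
  set a : EuclideanSpace ℝ (Fin d × Fin d) := WithLp.toLp 2 (fun p => u p.1 p.2)
  set b : EuclideanSpace ℝ (Fin d × Fin d) := WithLp.toLp 2 (fun p => v p.1 p.2)
  have hnorm : ∀ x : EuclideanSpace ℝ (Fin d × Fin d),
      ‖x‖ = Real.sqrt (∑ p : Fin d × Fin d, x p ^ 2) := by
    intro x
    rw [EuclideanSpace.norm_eq]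
    congr 1
    exact Finset.sum_congr rfl fun p _ => by rw [Real.norm_eq_abs, sq_abs]
  have htri : ‖a + b‖ ≤ ‖a‖ + ‖b‖ := norm_add_le a b
  rw [hnorm, hnorm, hnorm] at htri
  have hab : ∀ p : Fin d × Fin d, (a + b) p = u p.1 p.2 + v p.1 p.2 := fun p => rfl
  calc Real.sqrt (∑ i, ∑ j, (u i j + v i j) ^ 2)
      = Real.sqrt (∑ p : Fin d × Fin d, ((a + b) p) ^ 2) := by
        rw [Fintype.sum_prod_type]; simp only [hab]
    _ ≤ Real.sqrt (∑ p : Fin d × Fin d, a p ^ 2) + Real.sqrt (∑ p : Fin d × Fin d, b p ^ 2) :=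
        htri
    _ = Real.sqrt (∑ i, ∑ j, u i j ^ 2) + Real.sqrt (∑ i, ∑ j, v i j ^ 2) := by
        rw [Fintype.sum_prod_type, Fintype.sum_prod_type]

theorem stmt_6 (d s : ℕ) (Y Yhat Ystar : Matrix (Fin d) (Fin d) ℝ)
    (hY : ∑ i, ∑ j, |Y i j| ≤ ∑ i, ∑ j, |Ystar i j|)
    (hYhat : ∑ i, ∑ j, |Yhat i j| ≤ ∑ i, ∑ j, |Ystar i j|)
    (hsparse : ∀ i, ({j | Ystar i j ≠ 0} : Finset (Fin d)).card ≤ s) :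
    ∑ i, ∑ j, |Y i j - Yhat i j| ≤
      2 * Real.sqrt (s * d) * Real.sqrt (∑ i, ∑ j, (Y i j - Yhat i j) ^ 2) +
      4 * Real.sqrt (s * d) * Real.sqrt (∑ i, ∑ j, (Yhat i j - Ystar i j) ^ 2) := by
  have hkey1 := key_lemma d s Y Ystar hY hsparse
  have hkey2 := key_lemma d s Yhat Ystar hYhat hsparse
  set A := Real.sqrt (∑ i, ∑ j, (Y i j - Yhat i j) ^ 2) with hA
  set B := Real.sqrt (∑ i, ∑ j, (Yhat i j - Ystar i j) ^ 2) with hB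
  have htri : ∑ i, ∑ j, |Y i j - Yhat i j| ≤
      ∑ i, ∑ j, |Y i j - Ystar i j| + ∑ i, ∑ j, |Yhat i j - Ystar i j| := by
    rw [← Finset.sum_add_distrib]
    refine Finset.sum_le_sum fun i _ => ?_
    rw [← Finset.sum_add_distrib]
    refine Finset.sum_le_sum fun j _ => ?_
    calc |Y i j - Yhat i j| = |(Y i j - Ystar i j) + -(Yhat i j - Ystar i j)| := by ring_nf
      _ ≤ |Y i j - Ystar i j| + |-(Yhat i j - Ystar i j)| := abs_add_le _ _
      _ = |Y i j - Ystar i j| + |Yhat i j - Ystar i j| := by rw [abs_neg]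
  have hmink : Real.sqrt (∑ i, ∑ j, (Y i j - Ystar i j) ^ 2) ≤ A + B := by
    have := minkowski_aux d (fun i j => Y i j - Yhat i j) (fun i j => Yhat i j - Ystar i j)
    simp only [sub_add_sub_cancel] at this
    exact this
  have hs : (0 : ℝ) ≤ Real.sqrt (s * d) := Real.sqrt_nonneg _
  calc ∑ i, ∑ j, |Y i j - Yhat i j|
      ≤ ∑ i, ∑ j, |Y i j - Ystar i j| + ∑ i, ∑ j, |Yhat i j - Ystar i j| := htri
    _ ≤ 2 * Real.sqrt (s * d) * Real.sqrt (∑ i, ∑ j, (Y i j - Ystar i j) ^ 2)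
        + 2 * Real.sqrt (s * d) * B := by linarith
    _ ≤ 2 * Real.sqrt (s * d) * (A + B) + 2 * Real.sqrt (s * d) * B := by nlinarith [hmink]
    _ = 2 * Real.sqrt (s * d) * A + 4 * Real.sqrt (s * d) * B := by ring
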